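/- For every Mockingbird term t, the map fr is injective on the set {s : t ≼ s}: if t ≼ s, t ≼ s', and fr(s) = fr(s'), then s = s'. -/
import Mathlib


/-- Mockingbird terms: the constant `M`, variables `x i`, and applications. -/
inductive MTerm : Type
  | M : MTerm
  | var : ℕ → MTerm
  | app : MTerm → MTerm → MTerm
  deriving DecidableEq

/-- The one-step rewrite relation `⇒` on Mockingbird terms. -/
inductive Step : MTerm → MTerm → Prop
  | mock (t : MTerm) : Step (MTerm.app MTerm.M t) (MTerm.app t t)
  | left {t1 t1' : MTerm} (t2 : MTerm) :
      Step t1 t1' → Step (MTerm.app t1 t2) (MTerm.app t1' t2)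
  | right (t1 : MTerm) {t2 t2' : MTerm} :
      Step t2 t2' → Step (MTerm.app t1 t2) (MTerm.app t1 t2')

/-- `≼`, the reflexive-transitive closure of `⇒`. -/
def MLe : MTerm → MTerm → Prop := Relation.ReflTransGen Step

/-- `≡`, the reflexive-symmetric-transitive closure of `⇒`. -/
def MEquiv : MTerm → MTerm → Prop := Relation.EqvGen Step

/-- Strict version of `≼`. -/
def MLt (s t : MTerm) : Prop := MLe s t ∧ s ≠ t

/-- Covering relation for `≼`. -/
def MCovBy (s t : MTerm) : Prop := MLt s t ∧ ∀ z, MLt s z → ¬ MLt z t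

/-- Duplicative trees: white or black nodes with a list (forest) of children. -/
inductive DTree : Type
  | W : List DTree → DTree
  | B : List DTree → DTree

/-- The one-step relation `⋖` on duplicative forests. -/
inductive DStep : List DTree → List DTree → Prop
  | dup (g : List DTree) : DStep [DTree.W g] [DTree.B (g ++ g)]
  | white {g g' : List DTree} : DStep g g' → DStep [DTree.W g] [DTree.W g']
  | black {g g' : List DTree} : DStep g g' → DStep [DTree.B g] [DTree.B g']
  | head {t t' : DTree} (f : List DTree) : DStep [t] [t'] → DStep (t :: f) (t' :: f)
  | tail (t : DTree) {f f' : List DTree} : DStep f f' → DStep (t :: f) (t :: f')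

/-- `≪`, the reflexive-transitive closure of `⋖`. -/
def DLe : List DTree → List DTree → Prop := Relation.ReflTransGen DStep

/-- The map `fr` from Mockingbird terms to duplicative forests. -/
def fr : MTerm → List DTree
  | MTerm.M => []
  | MTerm.var _ => []
  | MTerm.app MTerm.M MTerm.M => [DTree.B []]
  | MTerm.app MTerm.M t' => [DTree.W (fr t')]
  | MTerm.app t t' => [DTree.B (fr t ++ fr t')]

mutual
  /-- The pruning map on duplicative trees (returns a forest). -/
  def prT : DTree → List DTree
    | DTree.W g => [DTree.W (prF g)]
    | DTree.B g => prF g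
  /-- The pruning map on duplicative forests. -/
  def prF : List DTree → List DTree
    | [] => []
    | t :: f => prT t ++ prF f
end

mutual
  /-- The statistic `mtStat` on duplicative trees. -/
  def mtStat : DTree → ℕ
    | DTree.W g => 2 * ml g
    | DTree.B g => ml g
  /-- Sum of `mtStat` over the trees of a forest. -/
  def mtsum : List DTree → ℕ
    | [] => 0
    | t :: f => mtStat t + mtsum f
  /-- The statistic `ml` on duplicative forests: `1 - ℓ + Σ mtStat`. -/
  def ml : List DTree → ℕ
    | f => mtsum f + 1 - f.length
end

mutual
  /-- Number of white nodes in a duplicative tree. -/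
  def whitesT : DTree → ℕ
    | DTree.W g => 1 + whitesF g
    | DTree.B g => whitesF g
  /-- Number of white nodes in a duplicative forest. -/
  def whitesF : List DTree → ℕ
    | [] => 0
    | t :: f => whitesT t + whitesF f
end

/-- Closed terms: no variables. -/
def MClosed : MTerm → Prop
  | MTerm.M => True
  | MTerm.var _ => False
  | MTerm.app a b => MClosed a ∧ MClosed b

/-- Degree: number of applications. -/
def deg : MTerm → ℕ
  | MTerm.M => 0
  | MTerm.var _ => 0
  | MTerm.app a b => deg a + deg b + 1

/-- Subterm relation. -/
inductive Subterm : MTerm → MTerm → Prop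
  | refl (t : MTerm) : Subterm t t
  | left {s a : MTerm} (b : MTerm) : Subterm s a → Subterm s (MTerm.app a b)
  | right (a : MTerm) {s b : MTerm} : Subterm s b → Subterm s (MTerm.app a b)

/-- The term `r_d`. -/
def rTerm : ℕ → MTerm
  | 0 => MTerm.M
  | d + 1 => MTerm.app MTerm.M (rTerm d)

/-- Saturated chain from `a` to `b`, given as the list of its elements. -/
def SatChain (a b : MTerm) (c : List MTerm) : Prop :=
  List.Chain' MCovBy c ∧ c.head? = some a ∧ c.getLast? = some b


section FrInj

lemma step_app' {u v : MTerm} (h : Step u v) : ∃ c d, v = MTerm.app c d := by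
  cases h <;> exact ⟨_, _, rfl⟩

lemma mle_M' {s : MTerm} (h : MLe MTerm.M s) : s = MTerm.M := by
  rcases Relation.ReflTransGen.cases_head h with h1 | ⟨c, hc, _⟩
  · exact h1.symm
  · cases hc

lemma mle_var' {i : ℕ} {s : MTerm} (h : MLe (MTerm.var i) s) : s = MTerm.var i := by
  rcases Relation.ReflTransGen.cases_head h with h1 | ⟨c, hc, _⟩
  · exact h1.symm
  · cases hc

lemma mle_to_M' {a : MTerm} (h : MLe a MTerm.M) : a = MTerm.M := by
  rcases Relation.ReflTransGen.cases_tail h with h1 | ⟨c, _, hc⟩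
  · exact h1.symm
  · obtain ⟨e, f, h2⟩ := step_app' hc
    cases h2

lemma mle_app' {c d s : MTerm} (h : MLe (MTerm.app c d) s) :
    ∃ e f, s = MTerm.app e f := by
  rcases Relation.ReflTransGen.cases_tail h with h1 | ⟨u, _, hu⟩
  · exact ⟨c, d, h1⟩
  · exact step_app' hu

lemma decompA_aux {t s : MTerm} (h : MLe t s) :
    ∀ a b, t = MTerm.app a b → a ≠ MTerm.M →
    ∃ a' b', s = MTerm.app a' b' ∧ MLe a a' ∧ MLe b b' := by
  induction h using Relation.ReflTransGen.head_induction_on with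
  | refl =>
    intro a b ht _
    exact ⟨a, b, ht, Relation.ReflTransGen.refl, Relation.ReflTransGen.refl⟩
  | head hstep htail ih =>
    intro a b ht ha
    subst ht
    cases hstep with
    | mock => exact absurd rfl ha
    | left _ h' =>
      obtain ⟨e, f, he⟩ := step_app' h'
      subst he
      obtain ⟨a', b', hsx, h1, h2⟩ := ih _ _ rfl (by simp)
      exact ⟨a', b', hsx, Relation.ReflTransGen.head h' h1, h2⟩
    | right _ h' =>
      obtain ⟨a', b', hsx, h1, h2⟩ := ih _ _ rfl ha
      exact ⟨a', b', hsx, h1, Relation.ReflTransGen.head h' h2⟩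

lemma decompA' {a b s : MTerm} (h : MLe (MTerm.app a b) s) (ha : a ≠ MTerm.M) :
    ∃ a' b', s = MTerm.app a' b' ∧ MLe a a' ∧ MLe b b' :=
  decompA_aux h a b rfl ha

lemma decompB_aux {t s : MTerm} (h : MLe t s) :
    ∀ b, t = MTerm.app MTerm.M b →
    (∃ b', s = MTerm.app MTerm.M b' ∧ MLe b b') ∨
    (∃ b', MLe b b' ∧ MLe (MTerm.app b' b') s) := by
  induction h using Relation.ReflTransGen.head_induction_on with
  | refl =>
    intro b hb
    exact Or.inl ⟨b, hb, Relation.ReflTransGen.refl⟩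
  | head hstep htail ih =>
    intro b hb
    subst hb
    cases hstep with
    | mock => exact Or.inr ⟨b, Relation.ReflTransGen.refl, htail⟩
    | left _ h' => cases h'
    | right _ h' =>
      rcases ih _ rfl with ⟨b', hsx, hb'⟩ | ⟨b', h1, h2⟩
      · exact Or.inl ⟨b', hsx, Relation.ReflTransGen.head h' hb'⟩
      · exact Or.inr ⟨b', Relation.ReflTransGen.head h' h1, h2⟩

lemma decompB' {b s : MTerm} (h : MLe (MTerm.app MTerm.M b) s) :
    (∃ b', s = MTerm.app MTerm.M b' ∧ MLe b b') ∨
    (∃ b', MLe b b' ∧ MLe (MTerm.app b' b') s) :=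
  decompB_aux h b rfl

lemma mle_MM_aux {t s : MTerm} (h : MLe t s) :
    t = MTerm.app MTerm.M MTerm.M → s = MTerm.app MTerm.M MTerm.M := by
  induction h using Relation.ReflTransGen.head_induction_on with
  | refl => exact fun h => h
  | head hstep htail ih =>
    intro ht
    subst ht
    cases hstep with
    | mock => exact ih rfl
    | left _ h' => cases h'
    | right _ h' => cases h'

lemma fr_app_M' {d : MTerm} (hd : d ≠ MTerm.M) :
    fr (MTerm.app MTerm.M d) = [DTree.W (fr d)] := by
  cases d with
  | M => exact absurd rfl hd
  | var i => rfl
  | app c d => rfl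

lemma fr_app_ne' {c d : MTerm} (hc : c ≠ MTerm.M) :
    fr (MTerm.app c d) = [DTree.B (fr c ++ fr d)] := by
  cases c with
  | M => exact absurd rfl hc
  | var i => rfl
  | app => rfl

lemma fr_app_len' (c d : MTerm) : (fr (MTerm.app c d)).length = 1 := by
  cases c <;> cases d <;> rfl

lemma fr_len_common {b u v : MTerm} (hu : MLe b u) (hv : MLe b v) :
    (fr u).length = (fr v).length := by
  cases b with
  | M => rw [mle_M' hu, mle_M' hv]
  | var i => rw [mle_var' hu, mle_var' hv]
  | app c d =>
    obtain ⟨e, f, rfl⟩ := mle_app' hu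
    obtain ⟨e', f', rfl⟩ := mle_app' hv
    rw [fr_app_len', fr_app_len']

lemma fr_inj_main : ∀ n : ℕ, ∀ t s s' : MTerm, deg s + deg s' ≤ n →
    MLe t s → MLe t s' → fr s = fr s' → s = s' := by
  intro n
  induction n using Nat.strong_induction_on with
  | _ n ih =>
  intro t s s' hn hs hs' hfr
  cases t with
  | M => rw [mle_M' hs, mle_M' hs']
  | var i => rw [mle_var' hs, mle_var' hs']
  | app a b =>
    by_cases ha : a = MTerm.M
    · subst ha
      by_cases hb : b = MTerm.M
      · subst hb
        rw [mle_MM_aux hs rfl, mle_MM_aux hs' rfl]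
      · rcases decompB' hs with ⟨b1, rfl, hb1⟩ | ⟨b1, hb1, hs1⟩
        · rcases decompB' hs' with ⟨b2, rfl, hb2⟩ | ⟨b2, hb2, hs2⟩
          · have h1 : b1 ≠ MTerm.M := fun h => hb (mle_to_M' (h ▸ hb1))
            have h2 : b2 ≠ MTerm.M := fun h => hb (mle_to_M' (h ▸ hb2))
            rw [fr_app_M' h1, fr_app_M' h2] at hfr
            have hfr2 : fr b1 = fr b2 := by simpa using hfr
            have e1 := ih (deg b1 + deg b2) (by simp [deg] at hn ⊢; omega)
              b b1 b2 le_rfl hb1 hb2 hfr2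
            rw [e1]
          · exfalso
            have h1 : b1 ≠ MTerm.M := fun h => hb (mle_to_M' (h ▸ hb1))
            have h2 : b2 ≠ MTerm.M := fun h => hb (mle_to_M' (h ▸ hb2))
            obtain ⟨c, d, rfl, hc, hd⟩ := decompA' hs2 h2
            have hc' : c ≠ MTerm.M := fun h => h2 (mle_to_M' (h ▸ hc))
            rw [fr_app_M' h1, fr_app_ne' hc'] at hfr
            simp at hfr
        · rcases decompB' hs' with ⟨b2, rfl, hb2⟩ | ⟨b2, hb2, hs2⟩
          · exfalso
            have h1 : b1 ≠ MTerm.M := fun h => hb (mle_to_M' (h ▸ hb1))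
            have h2 : b2 ≠ MTerm.M := fun h => hb (mle_to_M' (h ▸ hb2))
            obtain ⟨c, d, rfl, hc, hd⟩ := decompA' hs1 h1
            have hc' : c ≠ MTerm.M := fun h => h1 (mle_to_M' (h ▸ hc))
            rw [fr_app_M' h2, fr_app_ne' hc'] at hfr
            simp at hfr
          · have h1 : b1 ≠ MTerm.M := fun h => hb (mle_to_M' (h ▸ hb1))
            have h2 : b2 ≠ MTerm.M := fun h => hb (mle_to_M' (h ▸ hb2))
            obtain ⟨c1, d1, rfl, hc1, hd1⟩ := decompA' hs1 h1
            obtain ⟨c2, d2, rfl, hc2, hd2⟩ := decompA' hs2 h2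
            have hc1' : c1 ≠ MTerm.M := fun h => h1 (mle_to_M' (h ▸ hc1))
            have hc2' : c2 ≠ MTerm.M := fun h => h2 (mle_to_M' (h ▸ hc2))
            rw [fr_app_ne' hc1', fr_app_ne' hc2'] at hfr
            have hfr2 : fr c1 ++ fr d1 = fr c2 ++ fr d2 := by simpa using hfr
            have hlen : (fr c1).length = (fr c2).length :=
              fr_len_common (hb1.trans hc1) (hb2.trans hc2)
            obtain ⟨hA, hB⟩ := List.append_inj hfr2 hlen
            have e1 := ih (deg c1 + deg c2) (by simp [deg] at hn ⊢; omega)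
              b c1 c2 le_rfl (hb1.trans hc1) (hb2.trans hc2) hA
            have e2 := ih (deg d1 + deg d2) (by simp [deg] at hn ⊢; omega)
              b d1 d2 le_rfl (hb1.trans hd1) (hb2.trans hd2) hB
            rw [e1, e2]
    · obtain ⟨a1, b1, rfl, ha1, hb1⟩ := decompA' hs ha
      obtain ⟨a2, b2, rfl, ha2, hb2⟩ := decompA' hs' ha
      have ha1' : a1 ≠ MTerm.M := fun h => ha (mle_to_M' (h ▸ ha1))
      have ha2' : a2 ≠ MTerm.M := fun h => ha (mle_to_M' (h ▸ ha2))
      rw [fr_app_ne' ha1', fr_app_ne' ha2'] at hfr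
      have hfr2 : fr a1 ++ fr b1 = fr a2 ++ fr b2 := by simpa using hfr
      have hlen : (fr a1).length = (fr a2).length := fr_len_common ha1 ha2
      obtain ⟨hA, hB⟩ := List.append_inj hfr2 hlen
      have e1 := ih (deg a1 + deg a2) (by simp [deg] at hn ⊢; omega)
        a a1 a2 le_rfl ha1 ha2 hA
      have e2 := ih (deg b1 + deg b2) (by simp [deg] at hn ⊢; omega)
        b b1 b2 le_rfl hb1 hb2 hB
      rw [e1, e2]

end FrInj

/-- `fr` is injective on `{s : t ≼ s}`. -/
theorem fr_injective_on_upset (t s s' : MTerm)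
    (hs : MLe t s) (hs' : MLe t s') (h : fr s = fr s') : s = s' :=
  fr_inj_main (deg s + deg s') t s s' le_rfl hs hs' h
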